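/- (Proposition 2.) Let Σ_γ be a non-negative definite p₂×p₂ matrix and c ∈ ℝ^{p₂}. For j = 1, 2 let F_j be a k_j×p₂ real matrix of rank p₂ and Σ_{ε,j} a positive definite k_j×k_j matrix, and define M_j = F_jᵀ (F_j Σ_γ F_jᵀ + Σ_{ε,j})⁻¹ F_j and M_j⁰ = F_jᵀ Σ_{ε,j}⁻¹ F_j. Then cᵀ M_j⁻¹ c = cᵀ (M_j⁰)⁻¹ c + cᵀ Σ_γ c for j = 1, 2, and consequently cᵀ M₁⁻¹ c ≤ cᵀ M₂⁻¹ c if and only if cᵀ (M₁⁰)⁻¹ c ≤ cᵀ (M₂⁰)⁻¹ c. Hence a time plan is optimal for minimizing the c-criterion in the mixed effects marginal model for the time variable if and only if it is c-optimal in the corresponding fixed effect marginal model with error covariance Σ_ε, i.e., a time plan that is c-optimal for extrapolation at the median failure time t₀.₅ in the fixed effect model minimizes the asymptotic variance for estimating t₀.₅. -/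

import Mathlib

open Matrix

lemma mulVec_inj_of_rank {k p : ℕ} (F : Matrix (Fin k) (Fin p) ℝ) (hF : F.rank = p) :
    Function.Injective F.mulVec := by
  rw [show F.mulVec = F.mulVecLin from rfl, ← LinearMap.ker_eq_bot]
  have h := LinearMap.finrank_range_add_finrank_ker F.mulVecLin
  rw [Matrix.rank] at hF
  rw [hF] at h
  simp only [Module.finrank_fintype_fun_eq_card, Fintype.card_fin] at h
  have : Module.finrank ℝ (LinearMap.ker F.mulVecLin) = 0 := by omega
  exact Submodule.finrank_eq_zero.mp this

lemma key {k p : ℕ} (Sγ : Matrix (Fin p) (Fin p) ℝ) (hSγ : Sγ.PosSemidef)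
    (F : Matrix (Fin k) (Fin p) ℝ) (hF : F.rank = p)
    (Sε : Matrix (Fin k) (Fin k) ℝ) (hSε : Sε.PosDef) :
    (Fᵀ * (F * Sγ * Fᵀ + Sε)⁻¹ * F)⁻¹ = (Fᵀ * Sε⁻¹ * F)⁻¹ + Sγ := by
  have hFinj := mulVec_inj_of_rank F hF
  have hFS : (F * Sγ * Fᵀ).PosSemidef := by
    have := hSγ.mul_mul_conjTranspose_same F
    simpa using this
  have hV : (F * Sγ * Fᵀ + Sε).PosDef := Matrix.PosDef.posSemidef_add hFS hSε
  have hM0 : (Fᵀ * Sε⁻¹ * F).PosDef := by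
    refine Matrix.PosDef.of_dotProduct_mulVec_pos ?_ (fun x hx => ?_)
    · have := (hSε.inv.posSemidef.conjTranspose_mul_mul_same F).1
      simpa using this
    · have h2 := hSε.inv.dotProduct_mulVec_pos (x := F *ᵥ x) (fun h => hx (hFinj (by simpa using h)))
      have heq : star x ⬝ᵥ (Fᵀ * Sε⁻¹ * F) *ᵥ x = star (F *ᵥ x) ⬝ᵥ Sε⁻¹ *ᵥ (F *ᵥ x) := by
        simp [star_trivial, ← mulVec_mulVec, dotProduct_mulVec, vecMul_transpose]
      rw [heq]; exact h2
  have hVu : IsUnit (F * Sγ * Fᵀ + Sε).det := hV.det_pos.ne'.isUnit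
  have hSεu : IsUnit Sε.det := hSε.det_pos.ne'.isUnit
  have hM0u : IsUnit (Fᵀ * Sε⁻¹ * F).det := hM0.det_pos.ne'.isUnit
  set V := F * Sγ * Fᵀ + Sε with hVdef
  set M0 := Fᵀ * Sε⁻¹ * F with hM0def
  have hkey : V * (Sε⁻¹ * F * M0⁻¹) = F * (M0⁻¹ + Sγ) :=
    calc V * (Sε⁻¹ * F * M0⁻¹)
        = F * Sγ * ((Fᵀ * Sε⁻¹ * F) * M0⁻¹) + (Sε * Sε⁻¹) * (F * M0⁻¹) := by
          rw [hVdef]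
          simp only [Matrix.add_mul, Matrix.mul_assoc]
      _ = F * (M0⁻¹ + Sγ) := by
          rw [← hM0def, Matrix.mul_nonsing_inv _ hM0u, Matrix.mul_nonsing_inv _ hSεu,
            Matrix.mul_one, Matrix.one_mul, Matrix.mul_add]
          rw [add_comm]
  have h1 : (Fᵀ * V⁻¹ * F) * (M0⁻¹ + Sγ) = 1 := by
    have h2 : Fᵀ * V⁻¹ * F * (M0⁻¹ + Sγ) = Fᵀ * (V⁻¹ * (V * (Sε⁻¹ * F * M0⁻¹))) := by
      have hkey' := hkey
      simp only [Matrix.mul_assoc] at hkey' ⊢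
      rw [← hkey']
    rw [h2, Matrix.nonsing_inv_mul_cancel_left _ _ hVu,
      show Fᵀ * (Sε⁻¹ * F * M0⁻¹) = M0 * M0⁻¹ by rw [hM0def]; simp only [Matrix.mul_assoc],
      Matrix.mul_nonsing_inv _ hM0u]
  exact Matrix.inv_eq_right_inv h1

/-- **Proposition 2.** For two time plans with design matrices `F₁`, `F₂` (of full column
rank) and error covariances `Σε₁`, `Σε₂`, the mixed-effects `c`-criterion decomposes as
`cᵀ Mⱼ⁻¹ c = cᵀ (Mⱼ⁰)⁻¹ c + cᵀ Σγ c`, where `Mⱼ = Fⱼᵀ(Fⱼ Σγ Fⱼᵀ + Σεⱼ)⁻¹Fⱼ` and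
`Mⱼ⁰ = Fⱼᵀ Σεⱼ⁻¹ Fⱼ`; consequently `cᵀ M₁⁻¹ c ≤ cᵀ M₂⁻¹ c` iff
`cᵀ (M₁⁰)⁻¹ c ≤ cᵀ (M₂⁰)⁻¹ c`, i.e. a time plan is optimal in the mixed effects model iff
it is `c`-optimal in the corresponding fixed effect model. -/
theorem stmt10 {p₂ k₁ k₂ : ℕ}
    (Sγ : Matrix (Fin p₂) (Fin p₂) ℝ) (hSγ : Sγ.PosSemidef) (c : Fin p₂ → ℝ)
    (F₁ : Matrix (Fin k₁) (Fin p₂) ℝ) (hF₁ : F₁.rank = p₂)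
    (F₂ : Matrix (Fin k₂) (Fin p₂) ℝ) (hF₂ : F₂.rank = p₂)
    (Sε₁ : Matrix (Fin k₁) (Fin k₁) ℝ) (hSε₁ : Sε₁.PosDef)
    (Sε₂ : Matrix (Fin k₂) (Fin k₂) ℝ) (hSε₂ : Sε₂.PosDef) :
    (c ⬝ᵥ (F₁ᵀ * (F₁ * Sγ * F₁ᵀ + Sε₁)⁻¹ * F₁)⁻¹ *ᵥ c =
        c ⬝ᵥ (F₁ᵀ * Sε₁⁻¹ * F₁)⁻¹ *ᵥ c + c ⬝ᵥ Sγ *ᵥ c) ∧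
    (c ⬝ᵥ (F₂ᵀ * (F₂ * Sγ * F₂ᵀ + Sε₂)⁻¹ * F₂)⁻¹ *ᵥ c =
        c ⬝ᵥ (F₂ᵀ * Sε₂⁻¹ * F₂)⁻¹ *ᵥ c + c ⬝ᵥ Sγ *ᵥ c) ∧
    (c ⬝ᵥ (F₁ᵀ * (F₁ * Sγ * F₁ᵀ + Sε₁)⁻¹ * F₁)⁻¹ *ᵥ c ≤
          c ⬝ᵥ (F₂ᵀ * (F₂ * Sγ * F₂ᵀ + Sε₂)⁻¹ * F₂)⁻¹ *ᵥ c ↔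
        c ⬝ᵥ (F₁ᵀ * Sε₁⁻¹ * F₁)⁻¹ *ᵥ c ≤ c ⬝ᵥ (F₂ᵀ * Sε₂⁻¹ * F₂)⁻¹ *ᵥ c) := by
  have e1 := key Sγ hSγ F₁ hF₁ Sε₁ hSε₁
  have e2 := key Sγ hSγ F₂ hF₂ Sε₂ hSε₂
  rw [e1, e2]
  simp only [Matrix.add_mulVec, dotProduct_add]
  exact ⟨trivial, trivial, add_le_add_iff_right _⟩
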